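/- If a topological space (X, τ) is quasi-metrizable by an equidistant quasi-metric d (i.e., τ equals the open-ball topology O^d and d takes only the values 0 and some fixed t > 0), then (X, τ) is a T₀-Alexandroff space. -/
import Mathlib


open Topology

def IsAlexandroff {X : Type*} (τ : TopologicalSpace X) : Prop :=
  ∀ S : Set (Set X), (∀ s ∈ S, IsOpen[τ] s) → IsOpen[τ] (⋂₀ S)

def IsQuasiMetric {X : Type*} (d : X → X → ℝ) : Prop :=
  (∀ x y, 0 ≤ d x y) ∧ (∀ x, d x x = 0) ∧
  (∀ x y z, d x y ≤ d x z + d z y) ∧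
  (∀ x y, d x y = 0 → d y x = 0 → x = y)

def ballTopology {X : Type*} (d : X → X → ℝ) : TopologicalSpace X :=
  TopologicalSpace.generateFrom {B | ∃ x r, 0 < r ∧ B = {y | d x y < r}}

def IsEquidistantQM {X : Type*} (d : X → X → ℝ) : Prop :=
  ∃ t > 0, ∀ x y, d x y ≠ 0 → d x y = t

def IsEquidistantMetric {X : Type*} (ρ : X → X → ℝ) : Prop :=
  (∀ x y, ρ x y = 0 ↔ x = y) ∧ (∀ x y, ρ x y = ρ y x) ∧
  (∀ x y z, ρ x z ≤ ρ x y + ρ y z) ∧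
  ∃ t > 0, ∀ x y, x ≠ y → ρ x y = t

theorem stmt13 {X : Type*} (τ : TopologicalSpace X) (d : X → X → ℝ)
    (hd : IsQuasiMetric d) (he : IsEquidistantQM d) (hτ : τ = ballTopology d) :
    @T0Space X τ ∧ IsAlexandroff τ := by
  obtain ⟨hnn, hzero, htri, hsep⟩ := hd
  obtain ⟨t, ht, heqd⟩ := he
  subst hτ
  have key : ∀ U : Set X, IsOpen[ballTopology d] U ↔
      ∀ x ∈ U, ∀ y, d x y = 0 → y ∈ U := by
    intro U
    constructor
    · intro h
      induction h with
      | basic s hs =>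
        obtain ⟨x, r, hr, rfl⟩ := hs
        intro z hz y hy
        calc d x y ≤ d x z + d z y := htri x y z
          _ = d x z := by rw [hy, add_zero]
          _ < r := hz
      | univ => intro x _ y _; trivial
      | inter s u hs hu ihs ihu =>
        intro x hx y hy; exact ⟨ihs x hx.1 y hy, ihu x hx.2 y hy⟩
      | sUnion S hS ih =>
        rintro x ⟨s, hs, hxs⟩ y hy
        exact ⟨s, hs, ih s hs x hxs y hy⟩
    · intro h
      have hU : U = ⋃ x ∈ U, {y | d x y < t} := by
        ext z
        simp only [Set.mem_iUnion, Set.mem_setOf_eq]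
        constructor
        · intro hz; exact ⟨z, hz, by rw [hzero]; exact ht⟩
        · rintro ⟨x, hx, hxz⟩
          have h0 : d x z = 0 := by
            by_contra h0
            have := heqd x z h0; linarith
          exact h x hx z h0
      rw [hU, ← Set.sUnion_image]
      apply TopologicalSpace.GenerateOpen.sUnion
      rintro _ ⟨x, hx, rfl⟩
      exact TopologicalSpace.GenerateOpen.basic _ ⟨x, t, ht, rfl⟩
  constructor
  · letI : TopologicalSpace X := ballTopology d
    rw [t0Space_iff_exists_isOpen_xor'_mem]
    intro x y hxy
    rcases eq_or_ne (d x y) 0 with h1 | h1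
    · have h2 : d y x ≠ 0 := fun h2 => hxy (hsep x y h1 h2)
      refine ⟨{z | d y z = 0}, ?_, Or.inr ⟨hzero y, h2⟩⟩
      rw [key]
      intro a ha b hb
      have hle : d y b ≤ d y a + d a b := htri y b a
      have : d y b ≤ 0 := by
        simp only [Set.mem_setOf_eq] at ha; rw [ha, hb, add_zero] at hle; linarith
      exact le_antisymm this (hnn y b)
    · refine ⟨{z | d x z = 0}, ?_, Or.inl ⟨hzero x, h1⟩⟩
      rw [key]
      intro a ha b hb
      have hle : d x b ≤ d x a + d a b := htri x b a
      have : d x b ≤ 0 := by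
        simp only [Set.mem_setOf_eq] at ha; rw [ha, hb, add_zero] at hle; linarith
      exact le_antisymm this (hnn x b)
  · intro S hS
    rw [key]
    intro x hx y hy
    rw [Set.mem_sInter]
    intro s hs
    exact (key s).1 (hS s hs) x (hx s hs) y hy
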